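/- arXiv:2412.20854 — 7 statements merged into one kernel-verified Lean document; each statement's English description precedes it below -/
import Mathlib

section
/- Let ψ, φ : ℝ → (Fin N → ℂ) be two differentiable solutions of the nonlinear Schrödinger equation (with the same Hermitian Hamiltonian H, the same Hermitian matrices A_j, and the same functions f_j). Then for every t, the derivative of the overlap t ↦ ⟨ψ(t)|φ(t)⟩ satisfies d/dt ⟨ψ(t)|φ(t)⟩ = i · Σ_{j=0}^{N-1} [ f_j(|Σ_ℓ conj(ψ_ℓ(t))·(A_j)_{ℓ j}|) − f_j(|Σ_ℓ conj(φ_ℓ(t))·(A_j)_{ℓ j}|) ] · conj(ψ_j(t)) · φ_j(t). -/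
open scoped BigOperators ComplexConjugate

/-- For two differentiable solutions `ψ, φ` of the nonlinear
Schrödinger equation on `ℂ^N` (same Hermitian `H`, Hermitian `A j`, functions `f j`),
the overlap `t ↦ ⟨ψ(t)|φ(t)⟩` has derivative
`i · Σ_j [f_j(|⟨ψ|A_j|j⟩|) − f_j(|⟨φ|A_j|j⟩|)] · conj(ψ_j) · φ_j`. -/
theorem overlap_derivative
    {N : ℕ}
    (H : Matrix (Fin N) (Fin N) ℂ) (hH : H.IsHermitian)
    (A : Fin N → Matrix (Fin N) (Fin N) ℂ) (hA : ∀ j, (A j).IsHermitian)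
    (f : Fin N → ℝ → ℝ)
    (ψ φ ψ' φ' : ℝ → Fin N → ℂ)
    (hψd : ∀ t j, HasDerivAt (fun s => ψ s j) (ψ' t j) t)
    (hφd : ∀ t j, HasDerivAt (fun s => φ s j) (φ' t j) t)
    (hψeq : ∀ t j, Complex.I * ψ' t j =
      (∑ l, H j l * ψ t l) +
        (f j (‖∑ l, conj (ψ t l) * A j l j‖) : ℂ) * ψ t j)
    (hφeq : ∀ t j, Complex.I * φ' t j =
      (∑ l, H j l * φ t l) +
        (f j (‖∑ l, conj (φ t l) * A j l j‖) : ℂ) * φ t j)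
    (t : ℝ) :
    HasDerivAt (fun s => ∑ j, conj (ψ s j) * φ s j)
      (Complex.I * ∑ j,
        ((f j (‖∑ l, conj (ψ t l) * A j l j‖)
          - f j (‖∑ l, conj (φ t l) * A j l j‖) : ℝ) : ℂ)
          * (conj (ψ t j) * φ t j)) t := by

  -- derivative of each term
  have hderiv : HasDerivAt (fun s => ∑ j, conj (ψ s j) * φ s j)
      (∑ j, (conj (ψ' t j) * φ t j + conj (ψ t j) * φ' t j)) t := by
    apply HasDerivAt.fun_sum
    intro j _
    have h1 : HasDerivAt (fun s => conj (ψ s j)) (conj (ψ' t j)) t := by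
      simpa [Complex.star_def] using (hψd t j).star
    exact h1.mul (hφd t j)
  -- abbreviations
  set Fψ : Fin N → ℂ := fun j => ((f j (‖∑ l, conj (ψ t l) * A j l j‖) : ℝ) : ℂ) with hFψ
  set Fφ : Fin N → ℂ := fun j => ((f j (‖∑ l, conj (φ t l) * A j l j‖) : ℝ) : ℂ) with hFφ
  have hψc : ∀ j, conj (ψ' t j) =
      Complex.I * ((∑ l, conj (H j l) * conj (ψ t l)) + Fψ j * conj (ψ t j)) := by
    intro j
    have e1 := congrArg (starRingEnd ℂ) (hψeq t j)
    simp only [map_mul, map_add, map_sum, Complex.conj_I, Complex.conj_ofReal] at e1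
    linear_combination Complex.I * e1 + (starRingEnd ℂ) (ψ' t j) * Complex.I_sq
  have hφ'j : ∀ j, φ' t j =
      -Complex.I * ((∑ l, H j l * φ t l) + Fφ j * φ t j) := by
    intro j
    linear_combination -Complex.I * hφeq t j + φ' t j * Complex.I_sq
  have hHc : ∀ i j, conj (H i j) = H j i := by
    intro i j
    have := congrFun (congrFun hH j) i
    simpa [Matrix.conjTranspose_apply] using this
  have hcancel : (∑ j, (∑ l, conj (H j l) * conj (ψ t l)) * φ t j)
      = ∑ j, conj (ψ t j) * (∑ l, H j l * φ t l) := by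
    simp only [Finset.sum_mul, Finset.mul_sum]
    rw [Finset.sum_comm]
    refine Finset.sum_congr rfl fun l _ => Finset.sum_congr rfl fun j _ => ?_
    rw [hHc j l]; ring
  have hterm : ∀ j, conj (ψ' t j) * φ t j + conj (ψ t j) * φ' t j =
      Complex.I * ((∑ l, conj (H j l) * conj (ψ t l)) * φ t j
        - conj (ψ t j) * (∑ l, H j l * φ t l)
        + (Fψ j - Fφ j) * (conj (ψ t j) * φ t j)) := by
    intro j
    rw [hψc j, hφ'j j]; ring
  have hsum : (∑ j, (conj (ψ' t j) * φ t j + conj (ψ t j) * φ' t j)) =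
      Complex.I * ∑ j, ((f j (‖∑ l, conj (ψ t l) * A j l j‖)
          - f j (‖∑ l, conj (φ t l) * A j l j‖) : ℝ) : ℂ)
          * (conj (ψ t j) * φ t j) := by
    have : ∀ j : Fin N, ((f j (‖∑ l, conj (ψ t l) * A j l j‖)
          - f j (‖∑ l, conj (φ t l) * A j l j‖) : ℝ) : ℂ) = Fψ j - Fφ j := by
      intro j; push_cast [hFψ, hFφ]; ring
    simp only [this]
    calc (∑ j, (conj (ψ' t j) * φ t j + conj (ψ t j) * φ' t j))
        = ∑ j, Complex.I * ((∑ l, conj (H j l) * conj (ψ t l)) * φ t j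
            - conj (ψ t j) * (∑ l, H j l * φ t l)
            + (Fψ j - Fφ j) * (conj (ψ t j) * φ t j)) :=
          Finset.sum_congr rfl fun j _ => hterm j
      _ = Complex.I * ((∑ j, (∑ l, conj (H j l) * conj (ψ t l)) * φ t j)
            - (∑ j, conj (ψ t j) * (∑ l, H j l * φ t l))
            + ∑ j, (Fψ j - Fφ j) * (conj (ψ t j) * φ t j)) := by
          rw [← Finset.mul_sum, Finset.sum_add_distrib, Finset.sum_sub_distrib]
      _ = Complex.I * ∑ j, (Fψ j - Fφ j) * (conj (ψ t j) * φ t j) := by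
          rw [hcancel]; ring
  rw [← hsum]
  exact hderiv
end

section
/- Every differentiable solution ψ : ℝ → (Fin N → ℂ) of the nonlinear Schrödinger equation preserves the norm: for all t ∈ ℝ, Σ_j |ψ_j(t)|² = Σ_j |ψ_j(0)|². -/
open scoped BigOperators ComplexConjugate

/-- Every differentiable solution of the nonlinear Schrödinger
equation on `ℂ^N` preserves the norm: `Σ_j |ψ_j(t)|² = Σ_j |ψ_j(0)|²` for all `t`. -/
theorem norm_preservation
    {N : ℕ}
    (H : Matrix (Fin N) (Fin N) ℂ) (hH : H.IsHermitian)
    (A : Fin N → Matrix (Fin N) (Fin N) ℂ) (hA : ∀ j, (A j).IsHermitian)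
    (f : Fin N → ℝ → ℝ)
    (ψ ψ' : ℝ → Fin N → ℂ)
    (hψd : ∀ t j, HasDerivAt (fun s => ψ s j) (ψ' t j) t)
    (hψeq : ∀ t j, Complex.I * ψ' t j =
      (∑ l, H j l * ψ t l) +
        (f j ‖∑ l, conj (ψ t l) * A j l j‖ : ℂ) * ψ t j) :
    ∀ t : ℝ, ∑ j, ‖ψ t j‖ ^ 2 = ∑ j, ‖ψ 0 j‖ ^ 2 := by
  have hψ' : ∀ s j, ψ' s j = -Complex.I * ((∑ l, H j l * ψ s l) +
      (f j ‖∑ l, conj (ψ s l) * A j l j‖ : ℂ) * ψ s j) := by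
    intro s j
    have h := hψeq s j
    have h2 : Complex.I * ψ' s j =
        Complex.I * (-Complex.I * ((∑ l, H j l * ψ s l) +
          (f j ‖∑ l, conj (ψ s l) * A j l j‖ : ℂ) * ψ s j)) := by
      rw [h]
      have : Complex.I * -Complex.I = 1 := by
        simp [Complex.I_mul_I]
      rw [← mul_assoc, this, one_mul]
    exact mul_left_cancel₀ Complex.I_ne_zero h2
  have key : ∀ s, ∑ j, (conj (ψ' s j) * ψ s j + conj (ψ s j) * ψ' s j) = 0 := by
    intro s
    have e1 : ∀ j : Fin N, conj (ψ' s j) * ψ s j + conj (ψ s j) * ψ' s j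
        = Complex.I * ((∑ l, conj (H j l) * conj (ψ s l)) * ψ s j
              - conj (ψ s j) * ∑ l, H j l * ψ s l) := by
      intro j
      rw [hψ' s j]
      simp only [map_mul, map_add, map_sum, Complex.conj_I, map_neg, Complex.conj_ofReal]
      ring
    have hherm : ∑ j, ∑ l, conj (H j l) * conj (ψ s l) * ψ s j
        = ∑ j, ∑ l, conj (ψ s j) * (H j l * ψ s l) := by
      rw [Finset.sum_comm]
      refine Finset.sum_congr rfl fun a _ => Finset.sum_congr rfl fun b _ => ?_
      have h3 := hH.apply a b
      rw [Complex.star_def] at h3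
      rw [h3]; ring
    simp only [e1]
    rw [← Finset.mul_sum, Finset.sum_sub_distrib]
    have hX : ∑ j : Fin N, (∑ l, conj (H j l) * conj (ψ s l)) * ψ s j
        = ∑ j, ∑ l, conj (H j l) * conj (ψ s l) * ψ s j := by
      simp only [Finset.sum_mul]
    have hY : ∑ j : Fin N, conj (ψ s j) * ∑ l, H j l * ψ s l
        = ∑ j, ∑ l, conj (ψ s j) * (H j l * ψ s l) := by
      simp only [Finset.mul_sum]
    rw [hX, hY, hherm, sub_self, mul_zero]
  have hF : ∀ s, HasDerivAt (fun u => ∑ j, conj (ψ u j) * ψ u j) 0 s := by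
    intro s
    have h1 : HasDerivAt (fun u => ∑ j, conj (ψ u j) * ψ u j)
        (∑ j, (conj (ψ' s j) * ψ s j + conj (ψ s j) * ψ' s j)) s := by
      apply HasDerivAt.fun_sum
      intro j _
      exact ((hψd s j).star).mul (hψd s j)
    rw [key s] at h1
    exact h1
  intro t
  have hconst : (∑ j, conj (ψ t j) * ψ t j) = ∑ j, conj (ψ 0 j) * ψ 0 j := by
    have := is_const_of_deriv_eq_zero (f := fun u => ∑ j, conj (ψ u j) * ψ u j)
      (fun s => (hF s).differentiableAt) (fun s => (hF s).deriv) t 0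
    exact this
  have cast1 : ∀ u : ℝ, (∑ j, conj (ψ u j) * ψ u j)
      = ((∑ j, ‖ψ u j‖ ^ 2 : ℝ) : ℂ) := by
    intro u
    rw [Complex.ofReal_sum]
    refine Finset.sum_congr rfl fun j _ => ?_
    rw [mul_comm, Complex.mul_conj']
    push_cast [Complex.sq_norm]
    norm_cast
    rw [Complex.sq_norm]
  have := hconst
  rw [cast1 t, cast1 0] at this
  exact_mod_cast this
end

section
/- (Proposition 2) Suppose H_B = diag(b_0,…,b_{N-1}) is a real diagonal matrix (i.e., H_B is diagonal in the basis singled out by the nonlinearity), while H_A is an arbitrary Hermitian matrix. Then for every differentiable solution α of the bipartite nonlinear Schrödinger system, the diagonal entries of Bob's reduced density matrix are constant in time: for every k and every t ∈ ℝ, Σ_j |α_{jk}(t)|² = Σ_j |α_{jk}(0)|². Symmetrically, if H_A is real diagonal and H_B is arbitrary Hermitian, then for every j and t, Σ_k |α_{jk}(t)|² = Σ_k |α_{jk}(0)|². -/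
open scoped BigOperators ComplexConjugate

lemma bns_conserved {M N : ℕ}
    (H : Matrix (Fin M) (Fin M) ℂ) (hH : H.IsHermitian)
    (β β' : ℝ → Fin M → Fin N → ℂ) (c : ℝ → Fin M → Fin N → ℝ)
    (hd : ∀ t j k, HasDerivAt (fun s => β s j k) (β' t j k) t)
    (heq : ∀ t j k, Complex.I * β' t j k =
      (∑ l, H j l * β t l k) + (c t j k : ℂ) * β t j k)
    (k : Fin N) (t : ℝ) :
    ∑ j, ‖β t j k‖ ^ 2 = ∑ j, ‖β 0 j k‖ ^ 2 := by
  set h : ℝ → ℂ := fun s => ∑ j, β s j k * (starRingEnd ℂ) (β s j k) with hh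
  have hderiv : ∀ s, HasDerivAt h 0 s := by
    intro s
    have hD : HasDerivAt h
        (∑ j, (β' s j k * (starRingEnd ℂ) (β s j k)
          + β s j k * (starRingEnd ℂ) (β' s j k))) s := by
      apply HasDerivAt.fun_sum
      intro j _
      simpa using (hd s j k).fun_mul ((hd s j k).star)
    have ha' : ∀ j, β' s j k =
        -Complex.I * ((∑ l, H j l * β s l k) + (c s j k : ℂ) * β s j k) := by
      intro j
      have h2 := congrArg (fun z => -Complex.I * z) (heq s j k)
      simpa [← mul_assoc, Complex.I_mul_I] using h2
    set R : Fin M → ℂ :=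
      fun j => (∑ l, H j l * β s l k) + (c s j k : ℂ) * β s j k with hR
    have hHentry : ∀ p q, (starRingEnd ℂ) (H p q) = H q p := fun p q => hH.apply q p
    have hS : (starRingEnd ℂ) (∑ j, R j * (starRingEnd ℂ) (β s j k))
        = ∑ j, R j * (starRingEnd ℂ) (β s j k) := by
      have expand : ∀ γ : Fin M → ℂ, (∑ j, R j * γ j) =
          (∑ j, ∑ l, H j l * β s l k * γ j) + ∑ j, (c s j k : ℂ) * β s j k * γ j := by
        intro γ
        rw [← Finset.sum_add_distrib]
        refine Finset.sum_congr rfl fun j _ => ?_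
        rw [hR, add_mul, Finset.sum_mul]
      rw [expand, map_add, map_sum, map_sum]
      have h1 : (∑ j, (starRingEnd ℂ) (∑ l, H j l * β s l k * (starRingEnd ℂ) (β s j k)))
          = ∑ j, ∑ l, H j l * β s l k * (starRingEnd ℂ) (β s j k) := by
        simp only [map_sum, map_mul, hHentry, Complex.conj_conj]
        rw [Finset.sum_comm]
        refine Finset.sum_congr rfl fun j _ => Finset.sum_congr rfl fun l _ => ?_
        ring
      have h2 : (∑ j, (starRingEnd ℂ) ((c s j k : ℂ) * β s j k * (starRingEnd ℂ) (β s j k)))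
          = ∑ j, (c s j k : ℂ) * β s j k * (starRingEnd ℂ) (β s j k) := by
        refine Finset.sum_congr rfl fun j _ => ?_
        simp only [map_mul, Complex.conj_conj, Complex.conj_ofReal]
        ring
      rw [h1, h2]
    have key : (∑ j, (β' s j k * (starRingEnd ℂ) (β s j k)
        + β s j k * (starRingEnd ℂ) (β' s j k))) = 0 := by
      have step : ∀ j, β' s j k * (starRingEnd ℂ) (β s j k)
          + β s j k * (starRingEnd ℂ) (β' s j k)
          = -Complex.I * (R j * (starRingEnd ℂ) (β s j k))
            + Complex.I * (starRingEnd ℂ) (R j * (starRingEnd ℂ) (β s j k)) := by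
        intro j
        rw [ha' j]
        simp only [hR, map_mul, map_neg, Complex.conj_I, Complex.conj_conj]
        ring
      calc (∑ j, (β' s j k * (starRingEnd ℂ) (β s j k)
            + β s j k * (starRingEnd ℂ) (β' s j k)))
          = ∑ j, (-Complex.I * (R j * (starRingEnd ℂ) (β s j k))
            + Complex.I * (starRingEnd ℂ) (R j * (starRingEnd ℂ) (β s j k))) :=
            Finset.sum_congr rfl fun j _ => step j
        _ = -Complex.I * (∑ j, R j * (starRingEnd ℂ) (β s j k))
            + Complex.I * (starRingEnd ℂ) (∑ j, R j * (starRingEnd ℂ) (β s j k)) := by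
            rw [Finset.sum_add_distrib, ← Finset.mul_sum, ← Finset.mul_sum, map_sum]
        _ = 0 := by rw [hS]; ring
    rw [key] at hD
    exact hD
  have hconst : h t = h 0 :=
    is_const_of_deriv_eq_zero (fun x => (hderiv x).differentiableAt)
      (fun x => (hderiv x).deriv) t 0
  have habs : ∀ s, h s = ((∑ j, ‖β s j k‖ ^ 2 : ℝ) : ℂ) := by
    intro s
    rw [hh]
    push_cast
    refine Finset.sum_congr rfl fun j _ => ?_
    rw [← Complex.ofReal_pow, Complex.sq_norm]
    exact Complex.mul_conj _
  have := hconst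
  rw [habs t, habs 0] at this
  exact_mod_cast this

/-- **Proposition 2.** If `H_B` is real diagonal in the basis singled
out by the nonlinearity (and `H_A` is an arbitrary Hermitian matrix), then the
diagonal entries of Bob's reduced density matrix are constant in time:
`Σ_j |α_{jk}(t)|² = Σ_j |α_{jk}(0)|²`. Symmetrically with `A` and `B` exchanged. -/
theorem diagonal_of_reduced_state_constant
    {M N : ℕ} (hM : 1 ≤ M) (hN : 1 ≤ N)
    (H_A : Matrix (Fin M) (Fin M) ℂ) (H_B : Matrix (Fin N) (Fin N) ℂ)
    (hHA : H_A.IsHermitian) (hHB : H_B.IsHermitian)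
    (f : Fin M → Fin N → ℝ → ℝ)
    (α α' : ℝ → Fin M → Fin N → ℂ)
    (hαd : ∀ t j k, HasDerivAt (fun s => α s j k) (α' t j k) t)
    (hαeq : ∀ t j k, Complex.I * α' t j k =
      (∑ l, H_A j l * α t l k) + (∑ m, H_B k m * α t j m) +
      (f j k (‖α t j k‖) : ℂ) * α t j k) :
    ((∃ b : Fin N → ℝ, H_B = Matrix.diagonal fun k => (b k : ℂ)) →
      ∀ (k : Fin N) (t : ℝ),
        ∑ j, ‖α t j k‖ ^ 2 = ∑ j, ‖α 0 j k‖ ^ 2) ∧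
    ((∃ a : Fin M → ℝ, H_A = Matrix.diagonal fun j => (a j : ℂ)) →
      ∀ (j : Fin M) (t : ℝ),
        ∑ k, ‖α t j k‖ ^ 2 = ∑ k, ‖α 0 j k‖ ^ 2) := by
  have diagsum : ∀ {n : ℕ} (d : Fin n → ℝ) (v : Fin n → ℂ) (k : Fin n),
      ∑ m, (Matrix.diagonal fun k => (d k : ℂ)) k m * v m = (d k : ℂ) * v k := by
    intro n d v k
    rw [Finset.sum_eq_single k]
    · simp
    · intro m _ hm
      simp [Matrix.diagonal_apply_ne _ (Ne.symm hm)]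
    · simp
  constructor
  · rintro ⟨b, hb⟩ k t
    refine bns_conserved H_A hHA α α'
      (fun t j k => b k + f j k (‖α t j k‖)) hαd ?_ k t
    intro t j k
    have := hαeq t j k
    rw [hb, diagsum] at this
    rw [this]
    push_cast
    ring
  · rintro ⟨a, ha⟩ j t
    refine bns_conserved H_B hHB (fun t k j => α t j k) (fun t k j => α' t j k)
      (fun t k j => a j + f j k (‖α t j k‖))
      (fun t k j => hαd t j k) ?_ j t
    intro t k j
    have := hαeq t j k
    rw [ha, diagsum] at this
    rw [this]
    push_cast
    ring
end

section
/- Suppose H_A = diag(a_0,…,a_{M-1}) and H_B = diag(b_0,…,b_{N-1}) are real diagonal matrices. Then for every differentiable solution α of the bipartite nonlinear Schrödinger system, the entries of Bob's reduced density matrix are given explicitly by (ρ_B(t))_{k k'} = Σ_j α_{jk}(0)·conj(α_{jk'}(0)) · exp( −i·( b_k − b_{k'} + f_{jk}(|α_{jk}(0)|) − f_{jk'}(|α_{jk'}(0)|) )·t ) for all t, k, k'; in particular ρ_B(t) does not depend on the entries a_j of Alice's Hamiltonian. -/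
open scoped BigOperators ComplexConjugate

private lemma const_of_deriv_zero {g : ℝ → ℂ} (hd : ∀ t, HasDerivAt g 0 t) (t : ℝ) :
    g t = g 0 :=
  is_const_of_deriv_eq_zero (fun x => (hd x).differentiableAt)
    (fun x => (hd x).deriv) t 0

private lemma abs_const {β : ℝ → ℂ} {c : ℝ → ℝ}
    (hd : ∀ t, HasDerivAt β (-Complex.I * (c t : ℂ) * β t) t) (t : ℝ) :
    ‖β t‖ = ‖β 0‖ := by
  have h : ∀ s, (fun u => β u * (starRingEnd ℂ) (β u)) s
      = (fun u => β u * (starRingEnd ℂ) (β u)) 0 := by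
    intro s
    refine const_of_deriv_zero (g := fun u => β u * (starRingEnd ℂ) (β u)) ?_ s
    intro u
    have h1 := (hd u).mul ((hd u).star)
    simp only [Complex.star_def] at h1
    refine h1.congr_deriv ?_
    simp only [map_mul, map_neg, Complex.conj_I, Complex.conj_ofReal]
    ring
  have h2 := h t
  simp only at h2
  rw [Complex.mul_conj, Complex.mul_conj] at h2
  have : Complex.normSq (β t) = Complex.normSq (β 0) := by exact_mod_cast h2
  simp [Complex.norm_def, this]

private lemma sol_explicit {β : ℝ → ℂ} {lam : ℝ}
    (hd : ∀ t, HasDerivAt β (-Complex.I * (lam : ℂ) * β t) t) (t : ℝ) :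
    β t = β 0 * Complex.exp (-Complex.I * lam * t) := by
  have key : ∀ s, (fun u => β u * Complex.exp (Complex.I * lam * u)) s
      = (fun u => β u * Complex.exp (Complex.I * lam * u)) 0 := by
    intro s
    refine const_of_deriv_zero (g := fun u => β u * Complex.exp (Complex.I * lam * u)) ?_ s
    intro u
    have he : HasDerivAt (fun u : ℝ => Complex.exp (Complex.I * lam * u))
        (Complex.I * lam * Complex.exp (Complex.I * lam * u)) u := by
      have h0 : HasDerivAt (fun u : ℝ => Complex.I * lam * (u : ℂ)) (Complex.I * lam) u := by
        simpa using (Complex.ofRealCLM.hasDerivAt (x := u)).const_mul (Complex.I * lam)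
      simpa [mul_comm] using h0.cexp
    have h1 := (hd u).mul he
    refine h1.congr_deriv ?_
    ring
  have h2 := key t
  simp only [Complex.ofReal_zero, mul_zero, Complex.exp_zero, mul_one] at h2
  rw [← h2, mul_assoc, ← Complex.exp_add]
  norm_num

/-- If both local Hamiltonians are real diagonal, `H_A = diag(a)`,
`H_B = diag(b)`, the entries of Bob's reduced density matrix are
`(ρ_B(t))_{kk'} = Σ_j α_{jk}(0)·conj(α_{jk'}(0))·exp(−i(b_k − b_{k'} +
f_{jk}(|α_{jk}(0)|) − f_{jk'}(|α_{jk'}(0)|))t)`; in particular `ρ_B(t)` does not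
depend on the entries `a_j` of Alice's Hamiltonian. -/
theorem reduced_state_explicit_formula
    {M N : ℕ} (hM : 1 ≤ M) (hN : 1 ≤ N)
    (a : Fin M → ℝ) (b : Fin N → ℝ)
    (f : Fin M → Fin N → ℝ → ℝ)
    (α α' : ℝ → Fin M → Fin N → ℂ)
    (hαd : ∀ t j k, HasDerivAt (fun s => α s j k) (α' t j k) t)
    (hαeq : ∀ t j k, Complex.I * α' t j k =
      (∑ l, Matrix.diagonal (fun j => (a j : ℂ)) j l * α t l k) +
      (∑ m, Matrix.diagonal (fun k => (b k : ℂ)) k m * α t j m) +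
      (f j k (‖α t j k‖) : ℂ) * α t j k) :
    ∀ (t : ℝ) (k k' : Fin N),
      ∑ j, α t j k * conj (α t j k') =
        ∑ j, α 0 j k * conj (α 0 j k') *
          Complex.exp (-Complex.I *
            ((b k - b k' + f j k (‖α 0 j k‖)
              - f j k' (‖α 0 j k'‖) : ℝ) : ℂ) * (t : ℂ)) := by
  -- simplify the diagonal sums
  have heq : ∀ t j k, α' t j k =
      -Complex.I * ((a j + b k + f j k (‖α t j k‖) : ℝ) : ℂ) * α t j k := by
    intro t j k
    have h := hαeq t j k
    have hA : (∑ l, Matrix.diagonal (fun j => (a j : ℂ)) j l * α t l k)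
        = (a j : ℂ) * α t j k := by
      rw [Finset.sum_eq_single j]
      · simp [Matrix.diagonal_apply_eq]
      · intro l _ hl; simp [Matrix.diagonal_apply_ne' _ hl]
      · simp
    have hB : (∑ m, Matrix.diagonal (fun k => (b k : ℂ)) k m * α t j m)
        = (b k : ℂ) * α t j k := by
      rw [Finset.sum_eq_single k]
      · simp [Matrix.diagonal_apply_eq]
      · intro m _ hm; simp [Matrix.diagonal_apply_ne' _ hm]
      · simp
    rw [hA, hB] at h
    have := congrArg (fun z => -Complex.I * z) h
    simp only [← mul_assoc, neg_mul, Complex.I_mul_I, neg_neg, one_mul] at this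
    rw [this]
    push_cast
    ring
  have habs : ∀ t j k, ‖α t j k‖ = ‖α 0 j k‖ := by
    intro t j k
    exact abs_const (c := fun t => a j + b k + f j k (‖α t j k‖))
      (fun u => (heq u j k) ▸ hαd u j k) t
  have hsol : ∀ t j k, α t j k = α 0 j k *
      Complex.exp (-Complex.I * ((a j + b k + f j k (‖α 0 j k‖) : ℝ) : ℂ) * t) := by
    intro t j k
    have := sol_explicit (β := fun s => α s j k)
      (lam := a j + b k + f j k (‖α 0 j k‖)) (fun u => by
        have h := hαd u j k
        rw [heq u j k, habs u j k] at h
        exact h) t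
    simpa using this
  intro t k k'
  apply Finset.sum_congr rfl
  intro j _
  rw [hsol t j k, hsol t j k']
  rw [map_mul, ← Complex.exp_conj]
  rw [mul_mul_mul_comm, ← Complex.exp_add]
  congr 1
  simp only [map_mul, map_neg, Complex.conj_I, Complex.conj_ofReal]
  push_cast
  ring
end

section
/- (Proposition 4) Suppose H_B = diag(b_0,…,b_{N-1}) is a real diagonal matrix and H_A is an arbitrary Hermitian M×M matrix. Let ψ be a differentiable solution of the bipartite nonlinear Schrödinger system, let t₀ ∈ ℝ, and let (P_r)_{r ∈ R} be a finite family of M×M Hermitian idempotent matrices with Σ_r P_r = 𝟙 (the spectral projections of Alice's measured observable). For each r with p_r := Σ_{j,k} |Σ_ℓ (P_r)_{jℓ}·ψ_{ℓk}(t₀)|² > 0, let ξ^r be a differentiable solution of the same system for t ≥ t₀ with initial condition ξ^r_{jk}(t₀) = p_r^{-1/2}·Σ_ℓ (P_r)_{jℓ}·ψ_{ℓk}(t₀). Then for every k and every t ≥ t₀: Σ_{r : p_r > 0} p_r · Σ_j |ξ^r_{jk}(t)|² = Σ_j |ψ_{jk}(t)|² = Σ_j |ψ_{jk}(t₀)|².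 That is, the diagonal entries of Bob's reduced density matrix are constant in time and do not depend on whether Alice's measurement was performed at t₀ or not. -/
open scoped BigOperators ComplexConjugate

/-- For any solution of the bipartite nonlinear Schrödinger system (with `H_B`
real diagonal and `H_A` Hermitian), each column norm is constant in time. -/
private lemma bnls_col_const {M N : ℕ}
    (H_A : Matrix (Fin M) (Fin M) ℂ) (hHA : H_A.IsHermitian)
    (b : Fin N → ℝ) (f : Fin M → Fin N → ℝ → ℝ)
    (α α' : ℝ → Fin M → Fin N → ℂ) (t₀ : ℝ)
    (hd : ∀ t, t₀ ≤ t → ∀ j k, HasDerivAt (fun s => α s j k) (α' t j k) t)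
    (heq : ∀ t, t₀ ≤ t → ∀ j k, Complex.I * α' t j k =
      (∑ l, H_A j l * α t l k) +
      (∑ m, Matrix.diagonal (fun k => (b k : ℂ)) k m * α t j m) +
      (f j k (‖α t j k‖) : ℂ) * α t j k)
    (k : Fin N) (t : ℝ) (ht : t₀ ≤ t) :
    ∑ j, Complex.normSq (α t j k) = ∑ j, Complex.normSq (α t₀ j k) := by
  have hder : ∀ s, t₀ ≤ s →
      HasDerivAt (fun u => ∑ j, Complex.normSq (α u j k)) 0 s := by
    intro s hs
    -- the complex derivative of each |α|² term
    have hj : ∀ j : Fin M, HasDerivAt (fun u => (α u j k * conj (α u j k)).re)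
        ((α' s j k * conj (α s j k) + α s j k * conj (α' s j k)).re) s := by
      intro j
      have h1 : HasDerivAt (fun u => α u j k * conj (α u j k))
          (α' s j k * conj (α s j k) + α s j k * conj (α' s j k)) s :=
        (hd s hs j k).mul ((hd s hs j k).star)
      exact Complex.reCLM.hasFDerivAt.comp_hasDerivAt s h1
    have hsum := HasDerivAt.sum (fun j (_ : j ∈ Finset.univ) => hj j)
    -- algebraic vanishing of the derivative
    have key : (∑ j, (α' s j k * conj (α s j k) + α s j k * conj (α' s j k)))
        = 0 := by
      set a : Fin M → ℂ := fun j => α s j k with ha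
      set X : Fin M → ℂ := fun j => (∑ l, H_A j l * a l) + (b k : ℂ) * a j
          + (f j k (‖a j‖) : ℂ) * a j with hXdef
      have hX : ∀ j, α' s j k = -Complex.I * X j := by
        intro j
        have h := heq s hs j k
        have hdiag : (∑ m, Matrix.diagonal (fun k => (b k : ℂ)) k m * α s j m)
            = (b k : ℂ) * α s j k := by
          simp [Matrix.diagonal_apply, ite_mul]
        rw [hdiag] at h
        have h2 : α' s j k = -Complex.I * (Complex.I * α' s j k) := by
          rw [← mul_assoc, neg_mul, Complex.I_mul_I, neg_neg, one_mul]
        rw [h2, h, hXdef, ha]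
      have hH : ∀ j l, conj (H_A j l) = H_A l j := fun j l => hHA.apply l j
      have hSform : (∑ j, X j * conj (a j))
          = (∑ j, ∑ l, H_A j l * (a l * conj (a j)))
            + ∑ j, ((b k : ℂ) + (f j k (‖a j‖) : ℂ))
                * (a j * conj (a j)) := by
        rw [← Finset.sum_add_distrib]
        refine Finset.sum_congr rfl fun j _ => ?_
        rw [hXdef, add_mul, add_mul, Finset.sum_mul]
        simp only [mul_assoc]
        ring
      have hSconj : conj (∑ j, X j * conj (a j))
          = (∑ j, ∑ l, H_A l j * (conj (a l) * a j))
            + ∑ j, ((b k : ℂ) + (f j k (‖a j‖) : ℂ))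
                * (a j * conj (a j)) := by
        rw [hSform, map_add, map_sum, map_sum]
        congr 1
        · refine Finset.sum_congr rfl fun j _ => ?_
          rw [map_sum]
          refine Finset.sum_congr rfl fun l _ => ?_
          rw [map_mul, map_mul, Complex.conj_conj, hH j l]
        · refine Finset.sum_congr rfl fun j _ => ?_
          rw [map_mul, map_mul, Complex.conj_conj, map_add,
            Complex.conj_ofReal, Complex.conj_ofReal]
          ring
      have hS : conj (∑ j, X j * conj (a j)) = ∑ j, X j * conj (a j) := by
        rw [hSconj, hSform]
        congr 1
        rw [Finset.sum_comm]
        exact Finset.sum_congr rfl fun j _ =>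
          Finset.sum_congr rfl fun l _ => by ring
      calc ∑ j, (α' s j k * conj (a j) + a j * conj (α' s j k))
          = ∑ j, (-Complex.I * (X j * conj (a j))
              + Complex.I * conj (X j * conj (a j))) := by
            refine Finset.sum_congr rfl fun j _ => ?_
            rw [hX j]
            simp only [map_mul, map_neg, Complex.conj_I, Complex.conj_conj]
            ring
        _ = -Complex.I * (∑ j, X j * conj (a j))
              + Complex.I * conj (∑ j, X j * conj (a j)) := by
            rw [Finset.sum_add_distrib, ← Finset.mul_sum, ← Finset.mul_sum,
              map_sum]
        _ = 0 := by rw [hS]; ring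
    have h0 : (∑ j : Fin M,
        (α' s j k * conj (α s j k) + α s j k * conj (α' s j k)).re) = 0 := by
      rw [← Complex.re_sum, key, Complex.zero_re]
    rw [h0] at hsum
    have hfun : (fun u => ∑ j, Complex.normSq (α u j k))
        = fun u => ∑ j, (α u j k * conj (α u j k)).re := by
      funext u
      exact Finset.sum_congr rfl fun j _ => by
        rw [Complex.mul_conj, Complex.ofReal_re]
    rw [hfun]
    rw [Finset.sum_fn] at hsum
    exact hsum
  have hconst := constant_of_has_deriv_right_zero
    (f := fun u => ∑ j, Complex.normSq (α u j k)) (a := t₀) (b := t)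
    (fun x hx => ((hder x hx.1).continuousAt.continuousWithinAt))
    (fun x hx => (hder x hx.1).hasDerivWithinAt)
  exact hconst t ⟨ht, le_refl t⟩

/-- Projection identity: for a complete family of Hermitian idempotents,
the squared norms of the projections of a vector sum to its squared norm. -/
private lemma proj_norm_sum {M : ℕ} {R : Type*} [Fintype R]
    (P : R → Matrix (Fin M) (Fin M) ℂ)
    (hPherm : ∀ r, (P r).IsHermitian)
    (hPidem : ∀ r, P r * P r = P r)
    (hPsum : ∑ r, P r = 1)
    (v : Fin M → ℂ) :
    ∑ r, ∑ j, Complex.normSq (∑ l, P r j l * v l)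
      = ∑ j, Complex.normSq (v j) := by
  have key : ∀ r, (∑ j : Fin M,
      ((starRingEnd ℂ) ((P r).mulVec v j) * (P r).mulVec v j))
      = dotProduct (Matrix.vecMul (star v) (P r)) v := by
    intro r
    have h1 : dotProduct (star ((P r).mulVec v)) ((P r).mulVec v)
        = dotProduct (Matrix.vecMul (star v) (P r)) v := by
      rw [Matrix.star_mulVec, Matrix.dotProduct_mulVec,
        Matrix.vecMul_vecMul, (hPherm r).eq, hPidem r]
    simpa [dotProduct, Pi.star_apply] using h1
  have h2 : ∀ j i, (∑ r, P r j i) = (1 : Matrix (Fin M) (Fin M) ℂ) j i := by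
    intro j i
    rw [← hPsum]
    simp [Matrix.sum_apply]
  have hsum : ∑ r, dotProduct (Matrix.vecMul (star v) (P r)) v
      = ∑ j : Fin M, (starRingEnd ℂ) (v j) * v j := by
    have h1 : ∀ r, dotProduct (Matrix.vecMul (star v) (P r)) v
        = ∑ i, ∑ j, (starRingEnd ℂ) (v j) * P r j i * v i := by
      intro r
      simp [dotProduct, Matrix.vecMul, Finset.sum_mul]
    calc ∑ r, dotProduct (Matrix.vecMul (star v) (P r)) v
        = ∑ r, ∑ i, ∑ j, (starRingEnd ℂ) (v j) * P r j i * v i :=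
          Finset.sum_congr rfl fun r _ => h1 r
      _ = ∑ i, ∑ j, (starRingEnd ℂ) (v j) * (∑ r, P r j i) * v i := by
          rw [Finset.sum_comm]
          refine Finset.sum_congr rfl fun i _ => ?_
          rw [Finset.sum_comm]
          refine Finset.sum_congr rfl fun j _ => ?_
          simp only [← Finset.sum_mul, ← Finset.mul_sum]
      _ = ∑ j : Fin M, (starRingEnd ℂ) (v j) * v j := by
          simp_rw [h2]
          simp [Matrix.one_apply]
  have hc : ∀ z : ℂ, Complex.normSq z = ((starRingEnd ℂ) z * z).re := by
    intro z
    rw [mul_comm, Complex.mul_conj, Complex.ofReal_re]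
  calc ∑ r, ∑ j, Complex.normSq (∑ l, P r j l * v l)
      = (∑ r, ∑ j : Fin M,
          ((starRingEnd ℂ) ((P r).mulVec v j) * (P r).mulVec v j)).re := by
        rw [Complex.re_sum]
        refine Finset.sum_congr rfl fun r _ => ?_
        rw [Complex.re_sum]
        refine Finset.sum_congr rfl fun j _ => ?_
        rw [← hc]
        rfl
    _ = (∑ j : Fin M, (starRingEnd ℂ) (v j) * v j).re := by
        rw [← hsum]
        congr 1
        exact Finset.sum_congr rfl fun r _ => key r
    _ = ∑ j, Complex.normSq (v j) := by
        rw [Complex.re_sum]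
        exact Finset.sum_congr rfl fun j _ => (hc (v j)).symm

/-- **Proposition 4.** Suppose `H_B = diag(b)` is real diagonal and
`H_A` is Hermitian. Let `ψ` solve the bipartite nonlinear Schrödinger system, and
suppose Alice measures at time `t₀` an observable with spectral projections `P_r`;
for each outcome `r` with probability `p_r > 0` let `ξ^r` solve the same system
for `t ≥ t₀` with the collapsed initial condition. Then for every `k` and `t ≥ t₀`
the measurement-averaged diagonal entry of Bob's reduced density matrix equals the
no-measurement one, and both are constant in time:
`Σ_{r : p_r>0} p_r Σ_j |ξ^r_{jk}(t)|² = Σ_j |ψ_{jk}(t)|² = Σ_j |ψ_{jk}(t₀)|²`. -/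
theorem measurement_no_signalling_diagonal
    {M N : ℕ} {R : Type*} [Fintype R]
    (H_A : Matrix (Fin M) (Fin M) ℂ) (hHA : H_A.IsHermitian)
    (b : Fin N → ℝ)
    (f : Fin M → Fin N → ℝ → ℝ)
    (ψ ψ' : ℝ → Fin M → Fin N → ℂ)
    (hψd : ∀ t j k, HasDerivAt (fun s => ψ s j k) (ψ' t j k) t)
    (hψeq : ∀ t j k, Complex.I * ψ' t j k =
      (∑ l, H_A j l * ψ t l k) +
      (∑ m, Matrix.diagonal (fun k => (b k : ℂ)) k m * ψ t j m) +
      (f j k (‖ψ t j k‖) : ℂ) * ψ t j k)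
    (t₀ : ℝ)
    (P : R → Matrix (Fin M) (Fin M) ℂ)
    (hPherm : ∀ r, (P r).IsHermitian)
    (hPidem : ∀ r, P r * P r = P r)
    (hPsum : ∑ r, P r = 1)
    (p : R → ℝ)
    (hp : ∀ r, p r = ∑ j, ∑ k, ‖∑ l, P r j l * ψ t₀ l k‖ ^ 2)
    (ξ ξ' : R → ℝ → Fin M → Fin N → ℂ)
    (hξd : ∀ r, 0 < p r → ∀ t, t₀ ≤ t → ∀ j k,
      HasDerivAt (fun s => ξ r s j k) (ξ' r t j k) t)
    (hξeq : ∀ r, 0 < p r → ∀ t, t₀ ≤ t → ∀ j k,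
      Complex.I * ξ' r t j k =
        (∑ l, H_A j l * ξ r t l k) +
        (∑ m, Matrix.diagonal (fun k => (b k : ℂ)) k m * ξ r t j m) +
        (f j k (‖ξ r t j k‖) : ℂ) * ξ r t j k)
    (hξ0 : ∀ r, 0 < p r → ∀ j k,
      ξ r t₀ j k = (((Real.sqrt (p r))⁻¹ : ℝ) : ℂ) * ∑ l, P r j l * ψ t₀ l k) :
    ∀ (k : Fin N) (t : ℝ), t₀ ≤ t →
      (∑ r ∈ Finset.univ.filter (fun r => 0 < p r),
          p r * ∑ j, ‖ξ r t j k‖ ^ 2)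
        = ∑ j, ‖ψ t j k‖ ^ 2 ∧
      ∑ j, ‖ψ t j k‖ ^ 2 = ∑ j, ‖ψ t₀ j k‖ ^ 2 := by
  intro k t ht
  have hψconst : ∀ s, t₀ ≤ s →
      ∑ j, Complex.normSq (ψ s j k) = ∑ j, Complex.normSq (ψ t₀ j k) :=
    fun s hs => bnls_col_const H_A hHA b f ψ ψ' t₀
      (fun u _ => hψd u) (fun u _ => hψeq u) k s hs
  have hright : ∑ j, ‖ψ t j k‖ ^ 2
      = ∑ j, ‖ψ t₀ j k‖ ^ 2 := by
    simp only [Complex.sq_norm]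
    exact hψconst t ht
  refine ⟨?_, hright⟩
  -- each collapsed branch's column norm
  have hbranch : ∀ r, 0 < p r →
      p r * ∑ j, ‖ξ r t j k‖ ^ 2
        = ∑ j, Complex.normSq (∑ l, P r j l * ψ t₀ l k) := by
    intro r hr
    have hconst := bnls_col_const H_A hHA b f (ξ r) (ξ' r) t₀
      (hξd r hr) (hξeq r hr) k t ht
    have h0 : ∑ j, Complex.normSq (ξ r t₀ j k)
        = (p r)⁻¹ * ∑ j, Complex.normSq (∑ l, P r j l * ψ t₀ l k) := by
      rw [Finset.mul_sum]
      refine Finset.sum_congr rfl fun j _ => ?_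
      rw [hξ0 r hr j k, Complex.normSq_mul, Complex.normSq_ofReal]
      congr 1
      rw [← mul_inv, Real.mul_self_sqrt hr.le]
    simp only [Complex.sq_norm]
    rw [hconst, h0, ← mul_assoc, mul_inv_cancel₀ (ne_of_gt hr), one_mul]
  calc ∑ r ∈ Finset.univ.filter (fun r => 0 < p r),
        p r * ∑ j, ‖ξ r t j k‖ ^ 2
      = ∑ r ∈ Finset.univ.filter (fun r => 0 < p r),
          ∑ j, Complex.normSq (∑ l, P r j l * ψ t₀ l k) := by
        refine Finset.sum_congr rfl fun r hr => ?_
        exact hbranch r (Finset.mem_filter.mp hr).2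
    _ = ∑ r, ∑ j, Complex.normSq (∑ l, P r j l * ψ t₀ l k) := by
        refine Finset.sum_subset (Finset.filter_subset _ _) ?_
        intro r _ hrn
        have hrle : ¬ 0 < p r := by
          simpa using hrn
        have hp0 : p r = 0 := by
          have hnn : 0 ≤ p r := by
            rw [hp r]
            positivity
          exact le_antisymm (not_lt.mp hrle) hnn
        have hterm : ∀ j k', ‖∑ l, P r j l * ψ t₀ l k'‖ ^ 2 = 0 := by
          intro j k'
          have := hp r
          rw [hp0] at this
          have h := (Finset.sum_eq_zero_iff_of_nonneg
            (fun j _ => Finset.sum_nonneg fun k' _ => by positivity)).mp this.symm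
          have h2 := (Finset.sum_eq_zero_iff_of_nonneg
            (fun k' _ => by positivity)).mp (h j (Finset.mem_univ j))
          exact h2 k' (Finset.mem_univ k')
        refine Finset.sum_eq_zero fun j _ => ?_
        have := hterm j k
        rw [Complex.sq_norm] at this
        exact this
    _ = ∑ j, Complex.normSq (ψ t₀ j k) :=
        proj_norm_sum P hPherm hPidem hPsum (fun l => ψ t₀ l k)
    _ = ∑ j, ‖ψ t j k‖ ^ 2 := by
        simp only [Complex.sq_norm]
        exact (hψconst t ht).symm
end

section
/- Under purely nonlinear dynamics, the distinguishability from a basis state is constant: suppose H_A = 0 and H_B = 0, and let ψ and φ be differentiable solutions of the bipartite nonlinear Schrödinger system such that ψ(0) is the basis vector e_{j₀k₀}, i.e. ψ_{jk}(0) = 1 if (j,k) = (j₀,k₀) and 0 otherwise. Then the overlap modulus is constant in time: for all t ∈ ℝ, |Σ_{j,k} conj(ψ_{jk}(t))·φ_{jk}(t)| = |φ_{j₀k₀}(0)|. -/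
open scoped BigOperators ComplexConjugate

lemma const_abs_aux (u d : ℝ → ℂ) (r : ℝ → ℝ)
    (hu : ∀ t, HasDerivAt u (d t) t)
    (heq : ∀ t, Complex.I * d t = (r t : ℂ) * u t) :
    ∀ t, ‖u t‖ = ‖u 0‖ := by
  have hd : ∀ t, d t = -Complex.I * ((r t : ℂ) * u t) := by
    intro t
    have h := heq t
    have h2 : -Complex.I * (Complex.I * d t) = -Complex.I * ((r t : ℂ) * u t) := by rw [h]
    rw [← h2]; ring_nf; simp [Complex.I_sq]
  have hg : ∀ t, HasDerivAt (fun s => conj (u s) * u s) 0 t := by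
    intro t
    have h1 : HasDerivAt (fun s => conj (u s)) (conj (d t)) t := (hu t).star
    have h2 := h1.mul (hu t)
    refine h2.congr_deriv ?_
    rw [hd t]
    simp [Complex.conj_I]
    ring
  have hc : ∀ t, conj (u t) * u t = conj (u 0) * u 0 := fun t =>
    is_const_of_deriv_eq_zero (fun s => (hg s).differentiableAt)
      (fun s => (hg s).deriv) t 0
  intro t
  have h := congrArg norm (hc t)
  have h2 : ‖u t‖ ^ 2 = ‖u 0‖ ^ 2 := by
    simpa [norm_mul, sq] using h
  nlinarith [norm_nonneg (u t), norm_nonneg (u 0)]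

/-- Under purely nonlinear dynamics (`H_A = 0`, `H_B = 0`), the
distinguishability from a basis state is constant: if `ψ(0) = e_{j₀k₀}` then
`|⟨ψ(t)|φ(t)⟩| = |φ_{j₀k₀}(0)|` for all `t`. -/
theorem basis_state_overlap_constant
    {M N : ℕ}
    (H_A : Matrix (Fin M) (Fin M) ℂ) (H_B : Matrix (Fin N) (Fin N) ℂ)
    (hA0 : H_A = 0) (hB0 : H_B = 0)
    (f : Fin M → Fin N → ℝ → ℝ)
    (ψ φ dψ dφ : ℝ → Fin M → Fin N → ℂ)
    (hψd : ∀ t j k, HasDerivAt (fun s => ψ s j k) (dψ t j k) t)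
    (hψeq : ∀ t j k, Complex.I * dψ t j k =
      (∑ l, H_A j l * ψ t l k) + (∑ m, H_B k m * ψ t j m) +
      (f j k (‖ψ t j k‖) : ℂ) * ψ t j k)
    (hφd : ∀ t j k, HasDerivAt (fun s => φ s j k) (dφ t j k) t)
    (hφeq : ∀ t j k, Complex.I * dφ t j k =
      (∑ l, H_A j l * φ t l k) + (∑ m, H_B k m * φ t j m) +
      (f j k (‖φ t j k‖) : ℂ) * φ t j k)
    (j₀ : Fin M) (k₀ : Fin N)
    (hψ0 : ∀ j k, ψ 0 j k = if j = j₀ ∧ k = k₀ then 1 else 0) :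
    ∀ t : ℝ,
      ‖∑ j, ∑ k, conj (ψ t j k) * φ t j k‖
        = ‖φ 0 j₀ k₀‖ := by
  subst hA0 hB0
  have habsψ : ∀ j k t, ‖ψ t j k‖ = ‖ψ 0 j k‖ := by
    intro j k
    exact const_abs_aux (fun s => ψ s j k) (fun s => dψ s j k)
      (fun s => f j k (‖ψ s j k‖))
      (fun s => hψd s j k) (fun s => by simpa using hψeq s j k)
  have habsφ : ∀ j k t, ‖φ t j k‖ = ‖φ 0 j k‖ := by
    intro j k
    exact const_abs_aux (fun s => φ s j k) (fun s => dφ s j k)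
      (fun s => f j k (‖φ s j k‖))
      (fun s => hφd s j k) (fun s => by simpa using hφeq s j k)
  have hzero : ∀ t j k, ¬(j = j₀ ∧ k = k₀) → ψ t j k = 0 := by
    intro t j k h
    have h1 := habsψ j k t
    rw [hψ0 j k, if_neg h] at h1
    simpa using h1
  intro t
  have hsum : (∑ j, ∑ k, conj (ψ t j k) * φ t j k)
      = conj (ψ t j₀ k₀) * φ t j₀ k₀ := by
    rw [Finset.sum_eq_single j₀]
    · rw [Finset.sum_eq_single k₀]
      · intro k _ hk
        rw [hzero t j₀ k (by tauto)]; simp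
      · intro h; exact absurd (Finset.mem_univ k₀) h
    · intro j _ hj
      apply Finset.sum_eq_zero
      intro k _
      rw [hzero t j k (by tauto)]; simp
    · intro h; exact absurd (Finset.mem_univ j₀) h
  rw [hsum, norm_mul, Complex.norm_conj, habsψ j₀ k₀ t, hψ0 j₀ k₀, if_pos ⟨rfl, rfl⟩,
    habsφ j₀ k₀ t]
  simp
end

section
/- (Gisin–Simon–Bužek theorem, ensemble-independence implies linearity) Let n ≥ 1 and let E be a map assigning to every unit vector ψ ∈ ℂⁿ an n×n complex matrix E(ψ). Assume that E respects ensemble equivalence: for all finite families of weights p_i ≥ 0 with Σ_i p_i = 1 and unit vectors ψ_i, and weights q_m ≥ 0 with Σ_m q_m = 1 and unit vectors φ_m, the equality of density matrices Σ_i p_i·ψ_i ψ_i† = Σ_m q_m·φ_m φ_m† implies Σ_i p_i·E(ψ_i) = Σ_m q_m·E(φ_m). Then there exists a ℂ-linear map L : Matrix n n ℂ → Matrix n n ℂ such that L(ψψ†) = E(ψ) for every unit vector ψ. -/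
open scoped BigOperators ComplexConjugate
open Finset


noncomputable def sq2 : ℂ := ((Real.sqrt 2)⁻¹ : ℝ)

lemma sq2_mul_self : sq2 * sq2 = 2⁻¹ := by
  rw [sq2, ← Complex.ofReal_mul, ← mul_inv,
    Real.mul_self_sqrt (by norm_num : (0:ℝ) ≤ 2)]
  norm_num

lemma conj_sq2 : (starRingEnd ℂ) sq2 = sq2 := Complex.conj_ofReal _

lemma abs_sq2_sq : ‖sq2‖ ^ 2 = 2⁻¹ := by
  rw [sq2, Complex.norm_real, Real.norm_eq_abs, abs_of_nonneg (by positivity),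
    inv_pow, Real.sq_sqrt (by norm_num : (0:ℝ) ≤ 2)]

noncomputable def chi {n : ℕ} (a b : Fin n) : Fin n → ℂ := fun j =>
  if a = b then (if j = a then 1 else 0)
  else if a < b then (if j = a then sq2 else if j = b then sq2 else 0)
  else (if j = b then sq2 else if j = a then Complex.I * sq2 else 0)

lemma chi_same {n : ℕ} (a j : Fin n) : chi a a j = if j = a then 1 else 0 := by
  simp [chi]

lemma chi_lt {n : ℕ} {a b : Fin n} (h : a < b) (j : Fin n) :
    chi a b j = if j = a then sq2 else if j = b then sq2 else 0 := by
  simp only [chi]; rw [if_neg h.ne, if_pos h]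

lemma chi_gt {n : ℕ} {a b : Fin n} (h : b < a) (j : Fin n) :
    chi a b j = if j = b then sq2 else if j = a then Complex.I * sq2 else 0 := by
  simp only [chi]; rw [if_neg h.ne', if_neg (asymm h)]

lemma chi_apply_ne {n : ℕ} {a b j : Fin n} (hja : j ≠ a) (hjb : j ≠ b) :
    chi a b j = 0 := by
  simp only [chi]; split_ifs <;> simp_all

lemma chi_norm {n : ℕ} (a b : Fin n) : ∑ j, ‖chi a b j‖ ^ 2 = 1 := by
  rcases eq_or_ne a b with rfl | hab
  · have h : ∀ j, ‖chi a a j‖ ^ 2 = if j = a then 1 else 0 := by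
      intro j; rw [chi_same]; split_ifs <;> simp
    rw [Finset.sum_congr rfl fun j _ => h j, Finset.sum_ite_eq']
    simp
  · have key : ∀ (f : Fin n → ℂ),
        (∀ j, ‖f j‖ ^ 2 = (if j = a then 2⁻¹ else 0) + (if j = b then 2⁻¹ else 0)) →
        ∑ j, ‖f j‖ ^ 2 = 1 := by
      intro f hf
      rw [Finset.sum_congr rfl fun j _ => hf j, Finset.sum_add_distrib]
      simp [Finset.sum_ite_eq']
      norm_num
    rcases lt_or_gt_of_ne hab with h | h
    · apply key
      intro j; rw [chi_lt h]
      split_ifs with h1 h2 <;> simp_all [abs_sq2_sq]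
    · apply key
      intro j; rw [chi_gt h]
      split_ifs with h1 h2 <;> simp_all [abs_sq2_sq]

lemma chi_sum_mul_conj {n : ℕ} (a b : Fin n) :
    ∑ j, chi a b j * (starRingEnd ℂ) (chi a b j) = 1 := by
  have h : ∀ j, chi a b j * (starRingEnd ℂ) (chi a b j)
      = ((‖chi a b j‖ ^ 2 : ℝ) : ℂ) := by
    intro j; rw [Complex.mul_conj, Complex.sq_norm]
  rw [Finset.sum_congr rfl fun j _ => h j, ← Complex.ofReal_sum, chi_norm,
    Complex.ofReal_one]

noncomputable def gfun {n : ℕ} (A : Matrix (Fin n) (Fin n) ℂ) (a x : Fin n) : ℂ :=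
  if a < x then (A a x + A x a) + Complex.I * (A a x - A x a)
  else (A x a + A a x) + Complex.I * (A x a - A a x)

noncomputable def coeff {n : ℕ} (A : Matrix (Fin n) (Fin n) ℂ) (a b : Fin n) : ℂ :=
  if a = b then A a a - 2⁻¹ * ∑ x ∈ Finset.univ.erase a, gfun A a x
  else if a < b then A a b + A b a
  else Complex.I * (A b a - A a b)

lemma coeff_diag {n : ℕ} (A : Matrix (Fin n) (Fin n) ℂ) (a : Fin n) :
    coeff A a a = A a a - 2⁻¹ * ∑ x ∈ Finset.univ.erase a, gfun A a x := by
  rw [coeff, if_pos rfl]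

lemma coeff_lt {n : ℕ} (A : Matrix (Fin n) (Fin n) ℂ) {a b : Fin n} (h : a < b) :
    coeff A a b = A a b + A b a := by
  rw [coeff, if_neg h.ne, if_pos h]

lemma coeff_gt {n : ℕ} (A : Matrix (Fin n) (Fin n) ℂ) {a b : Fin n} (h : b < a) :
    coeff A a b = Complex.I * (A b a - A a b) := by
  rw [coeff, if_neg h.ne', if_neg (asymm h)]

lemma gfun_add {n : ℕ} (A B : Matrix (Fin n) (Fin n) ℂ) (a x : Fin n) :
    gfun (A + B) a x = gfun A a x + gfun B a x := by
  unfold gfun; split_ifs <;> simp [Matrix.add_apply] <;> ring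

lemma gfun_smul {n : ℕ} (z : ℂ) (A : Matrix (Fin n) (Fin n) ℂ) (a x : Fin n) :
    gfun (z • A) a x = z * gfun A a x := by
  unfold gfun; split_ifs <;> simp [Matrix.smul_apply, smul_eq_mul] <;> ring

lemma coeff_add {n : ℕ} (A B : Matrix (Fin n) (Fin n) ℂ) (a b : Fin n) :
    coeff (A + B) a b = coeff A a b + coeff B a b := by
  unfold coeff
  split_ifs with h1 h2
  · rw [Finset.sum_congr rfl fun x _ => gfun_add A B a x, Finset.sum_add_distrib]
    simp [Matrix.add_apply]; ring
  · simp [Matrix.add_apply]; ring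
  · simp [Matrix.add_apply]; ring

lemma coeff_smul {n : ℕ} (z : ℂ) (A : Matrix (Fin n) (Fin n) ℂ) (a b : Fin n) :
    coeff (z • A) a b = z * coeff A a b := by
  unfold coeff
  split_ifs with h1 h2
  · rw [Finset.sum_congr rfl fun x _ => gfun_smul z A a x, ← Finset.mul_sum]
    simp [Matrix.smul_apply, smul_eq_mul]; ring
  · simp [Matrix.smul_apply, smul_eq_mul]; ring
  · simp [Matrix.smul_apply, smul_eq_mul]; ring

lemma gfun_conj {n : ℕ} {A : Matrix (Fin n) (Fin n) ℂ}
    (hA : ∀ u v, (starRingEnd ℂ) (A u v) = A v u) (a x : Fin n) :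
    (starRingEnd ℂ) (gfun A a x) = gfun A a x := by
  unfold gfun; split_ifs <;>
    simp only [map_add, map_sub, map_mul, Complex.conj_I, hA] <;> ring

lemma coeff_conj {n : ℕ} {A : Matrix (Fin n) (Fin n) ℂ}
    (hA : ∀ u v, (starRingEnd ℂ) (A u v) = A v u) (a b : Fin n) :
    (starRingEnd ℂ) (coeff A a b) = coeff A a b := by
  unfold coeff
  split_ifs with h1 h2
  · rw [map_sub, map_mul, map_sum, Finset.sum_congr rfl fun x _ => gfun_conj hA a x, hA,
      show (starRingEnd ℂ) (2⁻¹:ℂ) = 2⁻¹ by simp [Complex.ext_iff]]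
  · rw [map_add, hA, hA]; ring
  · simp only [map_mul, map_sub, Complex.conj_I, hA]; ring
lemma chi_lt_self {n : ℕ} {a b : Fin n} (h : a < b) : chi a b a = sq2 := by
  rw [chi_lt h, if_pos rfl]

lemma chi_lt_other {n : ℕ} {a b : Fin n} (h : a < b) : chi a b b = sq2 := by
  rw [chi_lt h, if_neg h.ne', if_pos rfl]

lemma chi_gt_b {n : ℕ} {a b : Fin n} (h : b < a) : chi a b b = sq2 := by
  rw [chi_gt h, if_pos rfl]

lemma chi_gt_a {n : ℕ} {a b : Fin n} (h : b < a) : chi a b a = Complex.I * sq2 := by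
  rw [chi_gt h, if_neg h.ne', if_pos rfl]

lemma prod_zero {n : ℕ} {j l : Fin n} (hjl : j ≠ l) :
    ∀ a b : Fin n, (a ≠ j ∨ b ≠ l) → (a ≠ l ∨ b ≠ j) →
      chi a b j * (starRingEnd ℂ) (chi a b l) = 0 := by
  intro a b h1 h2
  by_cases hja : j = a
  · by_cases hlb : l = b
    · rcases h1 with h | h
      · exact absurd hja.symm h
      · exact absurd hlb.symm h
    · rw [chi_apply_ne (hja ▸ Ne.symm hjl) hlb, map_zero, mul_zero]
  · by_cases hjb : j = b
    · by_cases hla : l = a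
      · rcases h2 with h | h
        · exact absurd hla.symm h
        · exact absurd hjb.symm h
      · rw [chi_apply_ne hla (hjb ▸ Ne.symm hjl), map_zero, mul_zero]
    · rw [chi_apply_ne hja hjb, zero_mul]

lemma offdiag_sum {n : ℕ} (A : Matrix (Fin n) (Fin n) ℂ) {j l : Fin n} (hne : j ≠ l) :
    ∑ a, ∑ b, coeff A a b * (chi a b j * (starRingEnd ℂ) (chi a b l))
      = coeff A j l * (chi j l j * (starRingEnd ℂ) (chi j l l))
        + coeff A l j * (chi l j j * (starRingEnd ℂ) (chi l j l)) := by
  have hinner : ∀ a : Fin n,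
      ∑ b, coeff A a b * (chi a b j * (starRingEnd ℂ) (chi a b l))
        = (if a = j then coeff A j l * (chi j l j * (starRingEnd ℂ) (chi j l l)) else 0)
          + (if a = l then coeff A l j * (chi l j j * (starRingEnd ℂ) (chi l j l)) else 0) := by
    intro a
    by_cases haj : a = j
    · subst haj
      rw [if_pos rfl, if_neg hne, add_zero]
      apply Finset.sum_eq_single_of_mem l (Finset.mem_univ l)
      intro b _ hb
      rw [prod_zero hne _ _ (Or.inr hb) (Or.inl hne), mul_zero]
    · by_cases hal : a = l
      · subst hal
        rw [if_neg haj, if_pos rfl, zero_add]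
        apply Finset.sum_eq_single_of_mem j (Finset.mem_univ j)
        intro b _ hb
        rw [prod_zero hne _ _ (Or.inl (Ne.symm hne)) (Or.inr hb), mul_zero]
      · rw [if_neg haj, if_neg hal, add_zero]
        apply Finset.sum_eq_zero
        intro b _
        rw [prod_zero hne _ _ (Or.inl haj) (Or.inl hal), mul_zero]
  rw [Finset.sum_congr rfl fun a _ => hinner a, Finset.sum_add_distrib]
  simp only [Finset.sum_ite_eq', Finset.mem_univ, if_true]

lemma expand {n : ℕ} (A : Matrix (Fin n) (Fin n) ℂ) (j l : Fin n) :
    ∑ a, ∑ b, coeff A a b * (chi a b j * (starRingEnd ℂ) (chi a b l)) = A j l := by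
  rcases lt_trichotomy j l with hjl | rfl | hlj
  · rw [offdiag_sum A hjl.ne, coeff_lt A hjl, coeff_gt A hjl,
      chi_lt_self hjl, chi_lt_other hjl, chi_gt_b hjl, chi_gt_a hjl,
      conj_sq2, map_mul, Complex.conj_I, conj_sq2]
    linear_combination (A j l + A l j + (A j l - A l j)) * sq2_mul_self
      - (A j l - A l j) * sq2 * sq2 * Complex.I_mul_I
  · -- case j = l
    have hinner : ∀ a : Fin n, a ≠ j →
        ∑ b, coeff A a b * (chi a b j * (starRingEnd ℂ) (chi a b j))
          = coeff A a j * (chi a j j * (starRingEnd ℂ) (chi a j j)) := by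
      intro a ha
      apply Finset.sum_eq_single_of_mem j (Finset.mem_univ j)
      intro b _ hb
      rw [chi_apply_ne (fun h => ha h.symm) (fun h => hb h.symm), zero_mul, mul_zero]
    rw [← Finset.add_sum_erase _ _ (Finset.mem_univ j),
      ← Finset.add_sum_erase _ _ (Finset.mem_univ j),
      Finset.sum_congr rfl (fun a ha => hinner a (Finset.mem_erase.mp ha).1),
      add_assoc, ← Finset.sum_add_distrib]
    have hterm : ∀ x ∈ Finset.univ.erase j,
        coeff A j x * (chi j x j * (starRingEnd ℂ) (chi j x j))
          + coeff A x j * (chi x j j * (starRingEnd ℂ) (chi x j j))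
          = 2⁻¹ * gfun A j x := by
      intro x hx
      have hxj : x ≠ j := (Finset.mem_erase.mp hx).1
      rcases lt_or_gt_of_ne hxj with h | h
      · -- x < j
        rw [coeff_gt A h, coeff_lt A h, chi_gt_a h, chi_lt_other h,
          gfun, if_neg (asymm h), map_mul, Complex.conj_I, conj_sq2]
        linear_combination (A x j + A j x + Complex.I * (A x j - A j x)) * sq2_mul_self
          - Complex.I * (A x j - A j x) * sq2 * sq2 * Complex.I_mul_I
      · -- j < x
        rw [coeff_lt A h, coeff_gt A h, chi_lt_self h, chi_gt_b h,
          gfun, if_pos h, conj_sq2]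
        linear_combination (A j x + A x j + Complex.I * (A j x - A x j)) * sq2_mul_self
    rw [Finset.sum_congr rfl hterm, chi_same, if_pos rfl, coeff_diag, ← Finset.mul_sum]
    simp only [map_one, mul_one]
    ring
  · rw [offdiag_sum A hlj.ne', coeff_gt A hlj, coeff_lt A hlj,
      chi_gt_a hlj, chi_gt_b hlj, chi_lt_other hlj, chi_lt_self hlj, conj_sq2]
    linear_combination 2 * A j l * sq2_mul_self
      + (A l j - A j l) * sq2 * sq2 * Complex.I_mul_I
lemma coeff_total {n : ℕ} (A : Matrix (Fin n) (Fin n) ℂ) :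
    ∑ a, ∑ b, coeff A a b = ∑ j, A j j := by
  have h1 : ∀ a b : Fin n, coeff A a b
      = ∑ j, coeff A a b * (chi a b j * (starRingEnd ℂ) (chi a b j)) := by
    intro a b; rw [← Finset.mul_sum, chi_sum_mul_conj, mul_one]
  calc ∑ a, ∑ b, coeff A a b
      = ∑ a, ∑ b : Fin n, ∑ j, coeff A a b * (chi a b j * (starRingEnd ℂ) (chi a b j)) := by
        exact Finset.sum_congr rfl fun a _ => Finset.sum_congr rfl fun b _ => h1 a b
    _ = ∑ a, ∑ j, ∑ b : Fin n, coeff A a b * (chi a b j * (starRingEnd ℂ) (chi a b j)) := by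
        exact Finset.sum_congr rfl fun a _ => Finset.sum_comm
    _ = ∑ j, ∑ a, ∑ b : Fin n, coeff A a b * (chi a b j * (starRingEnd ℂ) (chi a b j)) :=
        Finset.sum_comm
    _ = ∑ j, A j j := Finset.sum_congr rfl fun j _ => expand A j j

noncomputable def Lmap {n : ℕ} (E : (Fin n → ℂ) → Matrix (Fin n) (Fin n) ℂ) :
    Matrix (Fin n) (Fin n) ℂ →ₗ[ℂ] Matrix (Fin n) (Fin n) ℂ where
  toFun A := ∑ a, ∑ b, coeff A a b • E (chi a b)
  map_add' A B := by
    simp only [coeff_add, add_smul, Finset.sum_add_distrib]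
  map_smul' z A := by
    simp only [coeff_smul, mul_smul, RingHom.id_apply, Finset.smul_sum]

section hz

variable {n : ℕ} (E : (Fin n → ℂ) → Matrix (Fin n) (Fin n) ℂ)
variable (hE : ∀ (k m : ℕ) (p : Fin k → ℝ) (ψ : Fin k → Fin n → ℂ)
        (q : Fin m → ℝ) (φ : Fin m → Fin n → ℂ),
      (∀ i, 0 ≤ p i) → (∑ i, p i) = 1 →
      (∀ i, ∑ j, ‖ψ i j‖ ^ 2 = 1) →
      (∀ i, 0 ≤ q i) → (∑ i, q i) = 1 →
      (∀ i, ∑ j, ‖φ i j‖ ^ 2 = 1) →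
      (∀ (j l : Fin n),
        ∑ i, (p i : ℂ) * (ψ i j * (starRingEnd ℂ) (ψ i l))
          = ∑ i, (q i : ℂ) * (φ i j * (starRingEnd ℂ) (φ i l))) →
      ∑ i, (p i : ℂ) • E (ψ i) = ∑ i, (q i : ℂ) • E (φ i))

include hE in
lemma hzero (N : ℕ) (r : Fin N → ℝ) (χ : Fin N → Fin n → ℂ)
    (hu : ∀ i, ∑ j, ‖χ i j‖ ^ 2 = 1)
    (hs : ∑ i, r i = 0)
    (hm : ∀ j l, ∑ i, (r i : ℂ) * (χ i j * (starRingEnd ℂ) (χ i l)) = 0) :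
    ∑ i, (r i : ℂ) • E (χ i) = 0 := by
  have hmax : ∀ x : ℝ, max x 0 - max (-x) 0 = x := by
    intro x; rcases le_total x 0 with h | h
    · rw [max_eq_right h, max_eq_left (by linarith), zero_sub, neg_neg]
    · rw [max_eq_left h, max_eq_right (by linarith), sub_zero]
  set t : ℝ := ∑ i, max (r i) 0 with ht
  have htn : ∑ i, max (-(r i)) 0 = t := by
    rw [ht, ← sub_eq_zero, ← Finset.sum_sub_distrib]
    rw [← neg_eq_zero, ← Finset.sum_neg_distrib]
    calc ∑ i, -(max (-r i) 0 - max (r i) 0) = ∑ i, r i := by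
          apply Finset.sum_congr rfl; intro i _
          have := hmax (r i); linarith [hmax (r i)]
      _ = 0 := hs
  have ht0 : 0 ≤ t := Finset.sum_nonneg fun i _ => le_max_right _ _
  rcases eq_or_lt_of_le ht0 with h0 | hpos
  · -- all r i = 0
    have hz : ∀ i ∈ Finset.univ, max (r i) 0 = 0 :=
      (Finset.sum_eq_zero_iff_of_nonneg (fun i _ => le_max_right _ _)).mp h0.symm
    have hzn : ∀ i ∈ Finset.univ, max (-(r i)) 0 = 0 :=
      (Finset.sum_eq_zero_iff_of_nonneg (fun i _ => le_max_right _ _)).mp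
        (by rw [htn, ← h0])
    have hr : ∀ i, r i = 0 := by
      intro i
      have h1 := hz i (Finset.mem_univ i)
      have h2 := hzn i (Finset.mem_univ i)
      have := hmax (r i); rw [h1, h2] at this; linarith
    apply Finset.sum_eq_zero; intro i _; rw [hr i]; simp
  · have htne : t ≠ 0 := hpos.ne'
    have key := hE N N (fun i => max (r i) 0 / t) χ (fun i => max (-(r i)) 0 / t) χ
      (fun i => div_nonneg (le_max_right _ _) ht0)
      (by rw [← Finset.sum_div, ← ht, div_self htne])
      hu
      (fun i => div_nonneg (le_max_right _ _) ht0)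
      (by rw [← Finset.sum_div, htn, div_self htne])
      hu
      (by
        intro j l
        rw [← sub_eq_zero, ← Finset.sum_sub_distrib]
        have : ∀ i : Fin N,
            ((max (r i) 0 / t : ℝ) : ℂ) * (χ i j * (starRingEnd ℂ) (χ i l))
              - ((max (-(r i)) 0 / t : ℝ) : ℂ) * (χ i j * (starRingEnd ℂ) (χ i l))
            = (t : ℂ)⁻¹ * ((r i : ℂ) * (χ i j * (starRingEnd ℂ) (χ i l))) := by
          intro i
          have hc : ((max (r i) 0 : ℝ) : ℂ) - ((max (-(r i)) 0 : ℝ) : ℂ) = (r i : ℂ) := by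
            rw [← Complex.ofReal_sub, hmax]
          push_cast
          linear_combination (χ i j * (starRingEnd ℂ) (χ i l)) / (t : ℂ) * hc
        rw [Finset.sum_congr rfl fun i _ => this i, ← Finset.mul_sum, hm j l, mul_zero])
    -- key : ∑ (p i) • E (χ i) = ∑ (q i) • E (χ i)
    have h1 : ∑ i, ((r i : ℂ) / t) • E (χ i) = 0 := by
      have hsplit : ∀ i : Fin N, ((r i : ℂ) / t) • E (χ i)
          = ((max (r i) 0 / t : ℝ) : ℂ) • E (χ i)
            - ((max (-(r i)) 0 / t : ℝ) : ℂ) • E (χ i) := by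
        intro i
        rw [← sub_smul]
        congr 1
        have hc : ((max (r i) 0 : ℝ) : ℂ) - ((max (-(r i)) 0 : ℝ) : ℂ) = (r i : ℂ) := by
          rw [← Complex.ofReal_sub, hmax]
        push_cast
        linear_combination -hc / (t : ℂ)
      rw [Finset.sum_congr rfl fun i _ => hsplit i, Finset.sum_sub_distrib, key, sub_self]
    have h2 : ∀ i : Fin N, (r i : ℂ) • E (χ i) = (t : ℂ) • (((r i : ℂ) / t) • E (χ i)) := by
      intro i
      rw [smul_smul, mul_div_cancel₀]
      exact_mod_cast Complex.ofReal_ne_zero.mpr htne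
    rw [Finset.sum_congr rfl fun i _ => h2 i, ← Finset.smul_sum, h1, smul_zero]

include hE in
lemma hzeroF (ι : Type) [Fintype ι] (r : ι → ℝ) (χ : ι → Fin n → ℂ)
    (hu : ∀ i, ∑ j, ‖χ i j‖ ^ 2 = 1)
    (hs : ∑ i, r i = 0)
    (hm : ∀ j l, ∑ i, (r i : ℂ) * (χ i j * (starRingEnd ℂ) (χ i l)) = 0) :
    ∑ i, (r i : ℂ) • E (χ i) = 0 := by
  classical
  let e := (Fintype.equivFin ι).symm
  have := hzero E hE (Fintype.card ι) (fun i => r (e i)) (fun i => χ (e i))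
    (fun i => hu (e i))
    (by rw [Equiv.sum_comp e (fun x => r x)]; exact hs)
    (fun j l => by rw [Equiv.sum_comp e fun x => (r x : ℂ) * (χ x j * (starRingEnd ℂ) (χ x l))]; exact hm j l)
  rwa [Equiv.sum_comp e fun x => (r x : ℂ) • E (χ x)] at this
end hz

/-- **Gisin–Simon–Bužek.** If a map `E` from unit vectors of `ℂⁿ`
to `n×n` matrices respects ensemble equivalence (equal density matrices give equal
averaged outputs), then there is a ℂ-linear map `L` on matrices with
`L(ψψ†) = E(ψ)` for every unit vector `ψ`. -/
theorem ensemble_independence_implies_linearity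
    {n : ℕ} (hn : 1 ≤ n)
    (E : (Fin n → ℂ) → Matrix (Fin n) (Fin n) ℂ)
    (hE : ∀ (k m : ℕ) (p : Fin k → ℝ) (ψ : Fin k → Fin n → ℂ)
        (q : Fin m → ℝ) (φ : Fin m → Fin n → ℂ),
      (∀ i, 0 ≤ p i) → (∑ i, p i) = 1 →
      (∀ i, ∑ j, ‖ψ i j‖ ^ 2 = 1) →
      (∀ i, 0 ≤ q i) → (∑ i, q i) = 1 →
      (∀ i, ∑ j, ‖φ i j‖ ^ 2 = 1) →
      (∀ (j l : Fin n),
        ∑ i, (p i : ℂ) * (ψ i j * conj (ψ i l))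
          = ∑ i, (q i : ℂ) * (φ i j * conj (φ i l))) →
      ∑ i, (p i : ℂ) • E (ψ i) = ∑ i, (q i : ℂ) • E (φ i)) :
    ∃ L : Matrix (Fin n) (Fin n) ℂ →ₗ[ℂ] Matrix (Fin n) (Fin n) ℂ,
      ∀ ψ : Fin n → ℂ, (∑ j, ‖ψ j‖ ^ 2 = 1) →
        L (Matrix.of fun j l => ψ j * conj (ψ l)) = E ψ := by
  classical
  refine ⟨Lmap E, ?_⟩
  intro ψ hψ
  set A : Matrix (Fin n) (Fin n) ℂ := Matrix.of fun j l => ψ j * (starRingEnd ℂ) (ψ l)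
    with hA
  have hAapp : ∀ u v, A u v = ψ u * (starRingEnd ℂ) (ψ v) := fun u v => rfl
  have hherm : ∀ u v, (starRingEnd ℂ) (A u v) = A v u := by
    intro u v
    rw [hAapp, hAapp, map_mul, Complex.conj_conj]
    ring
  have hreal : ∀ a b, ((coeff A a b).re : ℂ) = coeff A a b := by
    intro a b
    exact Complex.conj_eq_iff_re.mp (coeff_conj hherm a b)
  have htr : ∑ a, ∑ b, coeff A a b = 1 := by
    rw [coeff_total]
    have h : ∀ j, A j j = ((‖ψ j‖ ^ 2 : ℝ) : ℂ) := by
      intro j; rw [hAapp, Complex.mul_conj, Complex.sq_norm]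
    rw [Finset.sum_congr rfl fun j _ => h j, ← Complex.ofReal_sum, hψ,
      Complex.ofReal_one]
  have htrR : ∑ a, ∑ b, (coeff A a b).re = 1 := by
    have h : ((∑ a, ∑ b, (coeff A a b).re : ℝ) : ℂ) = 1 := by
      push_cast
      rw [Finset.sum_congr rfl fun a _ => Finset.sum_congr rfl fun b _ => hreal a b]
      exact htr
    exact_mod_cast h
  have h0 := hzeroF E hE (Option (Fin n × Fin n))
    (fun o => o.elim (-1) (fun p => (coeff A p.1 p.2).re))
    (fun o => o.elim ψ (fun p => chi p.1 p.2))
    (fun o => by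
      cases o with
      | none => exact hψ
      | some p => exact chi_norm p.1 p.2)
    (by
      rw [Fintype.sum_option]
      simp only [Option.elim]
      rw [Fintype.sum_prod_type, htrR]
      ring)
    (by
      intro j l
      rw [Fintype.sum_option]
      simp only [Option.elim]
      rw [Fintype.sum_prod_type]
      have hex : ∑ a, ∑ b, ((coeff A a b).re : ℂ) * (chi a b j * (starRingEnd ℂ) (chi a b l))
          = A j l := by
        rw [Finset.sum_congr rfl fun a _ => Finset.sum_congr rfl fun b _ => by rw [hreal]]
        exact expand A j l
      rw [hex, hAapp]
      push_cast
      ring)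
  rw [Fintype.sum_option] at h0
  simp only [Option.elim] at h0
  rw [Fintype.sum_prod_type] at h0
  have h1 : ∀ (a b : Fin n), ((coeff A a b).re : ℂ) • E (chi a b) = coeff A a b • E (chi a b) := by
    intro a b; rw [hreal]
  rw [Finset.sum_congr rfl fun a _ => Finset.sum_congr rfl fun b _ => h1 a b] at h0
  have h2 : ∑ a, ∑ b, coeff A a b • E (chi a b) = E ψ := by
    have : ((-1 : ℝ) : ℂ) • E ψ = -(E ψ) := by push_cast; rw [neg_one_smul]
    rw [this, neg_add_eq_zero] at h0
    exact h0.symm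
  exact h2
end
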